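/- Let σ ∈ (0,1) and let L be a horizontal line segment at height h > 0 whose endpoints have polar coordinates (r₁, θ₁) and (r₂, θ₂) with 0 < θ₁ < θ₂ < π (so r_i sin θ_i = h). Then ∫_{θ₁}^{θ₂} ∫_{h/sin θ}^∞ r^{−σ−1} dr dθ = (h^{−σ}/σ)·(Ψ_σ(cos θ₁) − Ψ_σ(cos θ₂)), where Ψ_σ(z) = (1/2)·sgn(z)·β_{z²}(1/2,(1+σ)/2). -/

import Mathlib

open Real MeasureTheory intervalIntegral

noncomputable def incBeta (x a b : ℝ) : ℝ :=
  ∫ u in (0:ℝ)..x, u ^ (a - 1) * (1 - u) ^ (b - 1)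

noncomputable def Psi (σ z : ℝ) : ℝ :=
  (1 / 2) * Real.sign z * incBeta (z ^ 2) (1 / 2) ((1 + σ) / 2)

namespace Stmt17Aux

noncomputable def f (σ u : ℝ) : ℝ := u ^ ((1:ℝ)/2 - 1) * (1 - u) ^ ((1 + σ)/2 - 1)

lemma f_intble (σ : ℝ) {x : ℝ} (hx0 : 0 ≤ x) (hx1 : x < 1) :
    IntervalIntegrable (f σ) volume 0 x := by
  have h1 : IntervalIntegrable (fun u : ℝ => u ^ ((1:ℝ)/2 - 1)) volume 0 x :=
    intervalIntegral.intervalIntegrable_rpow' (by norm_num)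
  refine h1.mul_continuousOn ?_
  rw [Set.uIcc_of_le hx0]
  refine (continuousOn_const.sub continuousOn_id).rpow_const fun u hu => Or.inl ?_
  have : u ≤ x := hu.2
  simp only [Pi.sub_apply, id_eq]
  nlinarith

lemma incBeta_hasDerivAt (σ : ℝ) {x : ℝ} (hx0 : 0 < x) (hx1 : x < 1) :
    HasDerivAt (fun y => incBeta y (1/2) ((1+σ)/2)) (f σ x) x := by
  have hint : IntervalIntegrable (f σ) volume 0 x := f_intble σ hx0.le hx1
  have hcontOn : ∀ y ∈ Set.Ioo (0:ℝ) 1, ContinuousAt (f σ) y := by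
    intro y hy
    have h1 : ContinuousAt (fun u : ℝ => u ^ ((1:ℝ)/2 - 1)) y :=
      (continuousAt_id).rpow_const (Or.inl hy.1.ne')
    have h2 : ContinuousAt (fun u : ℝ => (1 - u) ^ ((1 + σ)/2 - 1)) y :=
      (continuousAt_const.sub continuousAt_id).rpow_const
        (Or.inl (by simp only [Pi.sub_apply, id_eq]; intro hc; nlinarith [hy.2]))
    exact h1.mul h2
  have hmeas : StronglyMeasurableAtFilter (f σ) (nhds x) :=
    ContinuousAt.stronglyMeasurableAtFilter isOpen_Ioo hcontOn x ⟨hx0, hx1⟩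
  have hcont : ContinuousAt (f σ) x := hcontOn x ⟨hx0, hx1⟩
  exact intervalIntegral.integral_hasDerivAt_right hint hmeas hcont

lemma key_le (σ : ℝ) (hσ : σ ∈ Set.Ioo (0:ℝ) 1) {θ : ℝ} (h0 : 0 < θ) (hle : θ ≤ π/2) :
    Psi σ (Real.cos θ) = ∫ t in θ..(π/2), Real.sin t ^ σ := by
  rcases eq_or_lt_of_le hle with heq | hlt
  · subst heq
    simp [Psi, Real.cos_pi_div_two, Real.sign_zero]
  · have hcθ : 0 < Real.cos θ := Real.cos_pos_of_mem_Ioo ⟨by linarith [Real.pi_pos], hlt⟩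
    have hsθ : 0 < Real.sin θ := Real.sin_pos_of_pos_of_lt_pi h0 (by linarith [Real.pi_pos])
    have hc1 : Real.cos θ ^ 2 < 1 := by nlinarith [Real.sin_sq_add_cos_sq θ]
    set F : ℝ → ℝ := fun t => -(1/2) * incBeta (Real.cos t ^ 2) (1/2) ((1+σ)/2) with hF
    have hH : ContinuousOn (fun y => incBeta y (1/2) ((1+σ)/2)) (Set.Icc 0 (Real.cos θ ^ 2)) := by
      have hio : IntegrableOn (f σ) (Set.uIcc 0 (Real.cos θ ^ 2)) volume := by
        rw [Set.uIcc_of_le (sq_nonneg _)]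
        exact (intervalIntegrable_iff_integrableOn_Icc_of_le (sq_nonneg _)).1
          (f_intble σ (sq_nonneg _) hc1)
      have := intervalIntegral.continuousOn_primitive_interval hio
      rwa [Set.uIcc_of_le (sq_nonneg _)] at this
    have hmaps : ∀ t ∈ Set.Icc θ (π/2), Real.cos t ^ 2 ∈ Set.Icc 0 (Real.cos θ ^ 2) := by
      intro t ht
      have h1 : Real.cos t ≤ Real.cos θ :=
        Real.cos_le_cos_of_nonneg_of_le_pi h0.le (by linarith [Real.pi_pos, ht.2]) ht.1
      have h2 : 0 ≤ Real.cos t :=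
        Real.cos_nonneg_of_mem_Icc ⟨by linarith [Real.pi_pos, ht.1], ht.2⟩
      exact ⟨sq_nonneg _, by nlinarith⟩
    have hcont : ContinuousOn F (Set.Icc θ (π/2)) := by
      apply continuousOn_const.mul
      exact hH.comp ((Real.continuous_cos.pow 2).continuousOn) hmaps
    have hderiv : ∀ t ∈ Set.Ioo θ (π/2),
        HasDerivWithinAt F (Real.sin t ^ σ) (Set.Ioi t) t := by
      intro t ht
      have hct : 0 < Real.cos t := Real.cos_pos_of_mem_Ioo ⟨by linarith [Real.pi_pos, ht.1], ht.2⟩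
      have hst : 0 < Real.sin t :=
        Real.sin_pos_of_pos_of_lt_pi (h0.trans ht.1) (by linarith [Real.pi_pos, ht.2])
      have hx1 : Real.cos t ^ 2 < 1 := by nlinarith [Real.sin_sq_add_cos_sq t]
      have hHd := incBeta_hasDerivAt σ (pow_pos hct 2) hx1
      have hcos2 : HasDerivAt (fun s => Real.cos s ^ 2)
          ((2 : ℕ) * Real.cos t ^ (2 - 1) * (-Real.sin t)) t :=
        (Real.hasDerivAt_cos t).pow 2
      have hcomp := (hHd.comp t hcos2).const_mul (-(1/2) : ℝ)
      have hval : -(1/2) * (f σ (Real.cos t ^ 2) * ((2 : ℕ) * Real.cos t ^ (2 - 1) * (-Real.sin t)))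
          = Real.sin t ^ σ := by
        have e1 : (Real.cos t ^ 2 : ℝ) ^ ((1:ℝ)/2 - 1) = (Real.cos t)⁻¹ := by
          rw [← Real.rpow_natCast (Real.cos t) 2, ← Real.rpow_mul hct.le]
          norm_num
          exact Real.rpow_neg_one _
        have e2 : ((1 : ℝ) - Real.cos t ^ 2) ^ ((1 + σ)/2 - 1) = Real.sin t ^ (σ - 1) := by
          rw [← Real.sin_sq, ← Real.rpow_natCast (Real.sin t) 2, ← Real.rpow_mul hst.le]
          congr 1
          push_cast
          ring
        have e3 : Real.sin t ^ (σ - 1) * Real.sin t = Real.sin t ^ σ := by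
          rw [← Real.rpow_add_one hst.ne' (σ - 1)]
          norm_num
        unfold f
        rw [e1, e2]
        field_simp
        linear_combination 2 * Real.cos t * e3
      rw [hval] at hcomp
      exact hcomp.hasDerivWithinAt
    have hint : IntervalIntegrable (fun t => Real.sin t ^ σ) volume θ (π/2) := by
      apply ContinuousOn.intervalIntegrable
      refine Real.continuous_sin.continuousOn.rpow_const fun t ht => Or.inl ?_
      rw [Set.uIcc_of_le hle] at ht
      exact (Real.sin_pos_of_pos_of_lt_pi (lt_of_lt_of_le h0 ht.1)
        (by linarith [Real.pi_pos, ht.2])).ne'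
    have hFTC := intervalIntegral.integral_eq_sub_of_hasDeriv_right_of_le hle hcont hderiv hint
    have hF2 : F (π/2) = 0 := by
      simp [hF, Real.cos_pi_div_two, incBeta]
    rw [hFTC, hF2, Psi, Real.sign_of_pos hcθ]
    ring

lemma key (σ : ℝ) (hσ : σ ∈ Set.Ioo (0:ℝ) 1) {θ : ℝ} (h0 : 0 < θ) (hπ : θ < π) :
    Psi σ (Real.cos θ) = ∫ t in θ..(π/2), Real.sin t ^ σ := by
  rcases le_or_gt θ (π/2) with hle | hgt
  · exact key_le σ hσ h0 hle
  · have hrefl := key_le σ hσ (show 0 < π - θ by linarith) (by linarith)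
    have hodd : Psi σ (Real.cos θ) = -Psi σ (Real.cos (π - θ)) := by
      rw [Real.cos_pi_sub]
      unfold Psi
      rw [neg_sq, Real.sign_neg]
      ring
    rw [hodd, hrefl, ← intervalIntegral.integral_symm]
    have hcomp := intervalIntegral.integral_comp_sub_left
      (a := θ) (b := π/2) (fun t => Real.sin t ^ σ) π
    rw [show π - π/2 = π/2 by ring] at hcomp
    rw [← hcomp]
    apply intervalIntegral.integral_congr
    intro x _
    simp [Real.sin_pi_sub]

end Stmt17Aux

theorem stmt17 (σ : ℝ) (hσ : σ ∈ Set.Ioo (0:ℝ) 1) (h : ℝ) (hh : 0 < h)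
    (θ₁ θ₂ : ℝ) (h1 : 0 < θ₁) (h12 : θ₁ < θ₂) (h2 : θ₂ < π) :
    (∫ θ in θ₁..θ₂, ∫ r in Set.Ioi (h / Real.sin θ), r ^ (-σ - 1)) =
      (h ^ (-σ) / σ) * (Psi σ (Real.cos θ₁) - Psi σ (Real.cos θ₂)) := by
  obtain ⟨hσ0, hσ1⟩ := hσ
  have hI : ∀ θ ∈ Set.uIcc θ₁ θ₂,
      (∫ r in Set.Ioi (h / Real.sin θ), r ^ (-σ - 1)) = (h ^ (-σ) / σ) * Real.sin θ ^ σ := by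
    intro θ hθ
    rw [Set.uIcc_of_le h12.le] at hθ
    have hs : 0 < Real.sin θ :=
      Real.sin_pos_of_pos_of_lt_pi (lt_of_lt_of_le h1 hθ.1) (lt_of_le_of_lt hθ.2 h2)
    rw [integral_Ioi_rpow_of_lt (by linarith) (div_pos hh hs),
      show -σ - 1 + 1 = -σ by ring, Real.div_rpow hh.le hs.le, Real.rpow_neg hs.le]
    field_simp
  rw [intervalIntegral.integral_congr hI, intervalIntegral.integral_const_mul]
  congr 1
  rw [Stmt17Aux.key σ ⟨hσ0, hσ1⟩ h1 (h12.trans h2),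
    Stmt17Aux.key σ ⟨hσ0, hσ1⟩ (h1.trans h12) h2]
  have hcint : ∀ a b : ℝ, a ∈ Set.Ioo (0:ℝ) π → b ∈ Set.Ioo (0:ℝ) π →
      IntervalIntegrable (fun t => Real.sin t ^ σ) volume a b := by
    intro a b ha hb
    apply ContinuousOn.intervalIntegrable
    refine Real.continuous_sin.continuousOn.rpow_const fun t ht => Or.inl ?_
    have hsub : Set.uIcc a b ⊆ Set.Ioo (0:ℝ) π := Set.ordConnected_Ioo.uIcc_subset ha hb
    exact (Real.sin_pos_of_pos_of_lt_pi (hsub ht).1 (hsub ht).2).ne'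
  have hpi2 : (π/2 : ℝ) ∈ Set.Ioo (0:ℝ) π := ⟨by linarith [Real.pi_pos], by linarith [Real.pi_pos]⟩
  have h1m : θ₁ ∈ Set.Ioo (0:ℝ) π := ⟨h1, h12.trans h2⟩
  have h2m : θ₂ ∈ Set.Ioo (0:ℝ) π := ⟨h1.trans h12, h2⟩
  rw [← intervalIntegral.integral_add_adjacent_intervals
    (hcint θ₁ (π/2) h1m hpi2) (hcint (π/2) θ₂ hpi2 h2m),
    intervalIntegral.integral_symm θ₂ (π/2)]
  ring
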